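/- Any two lattices in ℝ^d of the same covolume are bounded displacement equivalent: there is a bijection between them moving each point by a uniformly bounded distance. -/

import Mathlib

open Set Function

lemma csb_prop {α β : Type*} [Nonempty β] {f : α → β} {g : β → α}
    (hf : Function.Injective f) (hg : Function.Injective g) :
    ∃ e : α ≃ β, ∀ a, e a = f a ∨ g (e a) = a := by
  classical
  set F : Set α →o Set α :=
    { toFun := fun s => (g '' (f '' s)ᶜ)ᶜ
      monotone' := fun s t hst =>
        compl_subset_compl.mpr <| image_mono <| compl_subset_compl.mpr <| image_mono hst }
  set s : Set α := F.lfp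
  have hs : (g '' (f '' s)ᶜ)ᶜ = s := F.map_lfp
  have hns : g '' (f '' s)ᶜ = sᶜ := compl_injective (by simp [hs])
  set g' := invFun g
  have g'g : LeftInverse g' g := leftInverse_invFun hg
  have hg'ns : g' '' sᶜ = (f '' s)ᶜ := by rw [← hns, g'g.image_image]
  set h : α → β := s.piecewise f g'
  have hsurj : Surjective h := by rw [← range_eq_univ, range_piecewise, hg'ns, union_compl_self]
  have hinj : Injective h := by
    refine (injective_piecewise_iff _).2 ⟨hf.injOn, ?_, ?_⟩
    · intro x hx y hy hxy
      obtain ⟨x', _, rfl⟩ : x ∈ g '' (f '' s)ᶜ := by rwa [hns]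
      obtain ⟨y', _, rfl⟩ : y ∈ g '' (f '' s)ᶜ := by rwa [hns]
      rw [g'g _, g'g _] at hxy
      rw [hxy]
    · intro x hx y hy hxy
      obtain ⟨y', hy', rfl⟩ : y ∈ g '' (f '' s)ᶜ := by rwa [hns]
      rw [g'g _] at hxy
      exact hy' ⟨x, hx, hxy⟩
  refine ⟨Equiv.ofBijective h ⟨hinj, hsurj⟩, fun a => ?_⟩
  by_cases ha : a ∈ s
  · left; simp [h, Set.piecewise, ha, Equiv.ofBijective]
  · right
    obtain ⟨a', _, rfl⟩ : a ∈ g '' (f '' s)ᶜ := by rwa [hns]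
    simp [h, Set.piecewise, ha, Equiv.ofBijective, g'g a']

open MeasureTheory Submodule Pointwise Module Bornology

variable {d : ℕ}

local notation "E" => EuclideanSpace ℝ (Fin d)

-- finiteness of lattice points in a ball
lemma lattice_ball_finite (L : Submodule ℤ (EuclideanSpace ℝ (Fin d))) [DiscreteTopology L]
    (x : EuclideanSpace ℝ (Fin d)) (R : ℝ) :
    {y : L | ‖(y : EuclideanSpace ℝ (Fin d)) - x‖ ≤ R}.Finite := by
  have h1 : (Metric.closedBall x R ∩ (L : Set (EuclideanSpace ℝ (Fin d)))).Finite := by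
    change ((_ : Set (EuclideanSpace ℝ (Fin d))) ∩ L.toAddSubgroup).Finite
    have : DiscreteTopology L.toAddSubgroup := (inferInstance : DiscreteTopology L)
    exact Metric.finite_isBounded_inter_isClosed DiscreteTopology.isDiscrete Metric.isBounded_closedBall inferInstance
  have : {y : L | ‖(y : EuclideanSpace ℝ (Fin d)) - x‖ ≤ R}
      ⊆ Subtype.val ⁻¹' (Metric.closedBall x R ∩ (L : Set (EuclideanSpace ℝ (Fin d)))) := by
    intro y hy
    exact ⟨mem_closedBall_iff_norm.mpr hy, y.2⟩
  exact Set.Finite.subset (Set.Finite.preimage Subtype.val_injective.injOn h1) this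

lemma lattice_fd (d : ℕ) (L : Submodule ℤ (EuclideanSpace ℝ (Fin d)))
    [DiscreteTopology L] [IsZLattice ℝ L] :
    ∃ F : Set (EuclideanSpace ℝ (Fin d)), MeasurableSet F ∧
      (∃ r : ℝ, 0 ≤ r ∧ ∀ w ∈ F, ‖w‖ ≤ r) ∧
      (∀ x : EuclideanSpace ℝ (Fin d), ∃! v : L, (v : EuclideanSpace ℝ (Fin d)) + x ∈ F) ∧
      ZLattice.covolume L = (volume F).toReal := by
  let b := Module.Free.chooseBasis ℤ L
  let b' := b.ofZLatticeBasis ℝ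
  have hspan : span ℤ (Set.range b') = L := b.ofZLatticeBasis_span ℝ
  refine ⟨ZSpan.fundamentalDomain b', ZSpan.fundamentalDomain_measurableSet b', ?_, ?_, ?_⟩
  · obtain ⟨r, hr⟩ := isBounded_iff_forall_norm_le.1 (ZSpan.fundamentalDomain_isBounded b')
    exact ⟨max r 0, le_max_right _ _, fun w hw => le_trans (hr w hw) (le_max_left _ _)⟩
  · intro x
    obtain ⟨v, hv, huniq⟩ := ZSpan.exist_unique_vadd_mem_fundamentalDomain b' x
    refine ⟨⟨(v : EuclideanSpace ℝ (Fin d)), (SetLike.ext_iff.mp hspan _).mp v.2⟩, hv, ?_⟩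
    intro y hy
    have hy' : (⟨(y : EuclideanSpace ℝ (Fin d)), (SetLike.ext_iff.mp hspan _).mpr y.2⟩ :
        span ℤ (Set.range b')) = v := huniq _ hy
    exact Subtype.ext (congrArg Subtype.val hy' : (y : EuclideanSpace ℝ (Fin d)) = v)
  · exact ZLattice.covolume_eq_measure_fundamentalDomain L volume
      (ZLattice.isAddFundamentalDomain b volume)

lemma exists_BD_injection (d : ℕ) (L₁ L₂ : Submodule ℤ (EuclideanSpace ℝ (Fin d)))
    [DiscreteTopology L₁] [IsZLattice ℝ L₁] [DiscreteTopology L₂] [IsZLattice ℝ L₂]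
    (hcov : ZLattice.covolume L₁ = ZLattice.covolume L₂) :
    ∃ R : ℝ, 0 ≤ R ∧ ∃ f : L₁ → L₂, Function.Injective f ∧
      ∀ x : L₁, ‖(f x : EuclideanSpace ℝ (Fin d)) - (x : EuclideanSpace ℝ (Fin d))‖ ≤ R := by
  classical
  obtain ⟨F₁, hF₁m, ⟨r₁, hr₁0, hr₁⟩, hpart₁, hcov₁⟩ := lattice_fd d L₁
  obtain ⟨F₂, hF₂m, ⟨r₂, hr₂0, hr₂⟩, hpart₂, hcov₂⟩ := lattice_fd d L₂
  set R := r₁ + r₂ with hR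
  have hR0 : 0 ≤ R := add_nonneg hr₁0 hr₂0
  -- volume facts
  have h1 : volume F₁ ≠ 0 ∧ volume F₁ ≠ ⊤ := by
    rw [← ENNReal.toReal_ne_zero, ← hcov₁]
    exact ZLattice.covolume_ne_zero L₁ volume
  have h2 : volume F₂ ≠ 0 ∧ volume F₂ ≠ ⊤ := by
    rw [← ENNReal.toReal_ne_zero, ← hcov₂]
    exact ZLattice.covolume_ne_zero L₂ volume
  have hFF : volume F₂ = volume F₁ := by
    refine ((ENNReal.toReal_eq_toReal_iff' h2.2 h1.2).mp ?_)
    rw [← hcov₁, ← hcov₂, hcov]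
  have hfin : ∀ x : L₁, {y : L₂ | ‖(y : EuclideanSpace ℝ (Fin d)) - x‖ ≤ R}.Finite :=
    fun x => lattice_ball_finite L₂ x R
  set t : L₁ → Finset L₂ := fun x => (hfin x).toFinset with ht
  have hall : ∀ s : Finset L₁, s.card ≤ (s.biUnion t).card := by
    intro s
    set U : Set (EuclideanSpace ℝ (Fin d)) :=
      ⋃ x ∈ s, ((x : EuclideanSpace ℝ (Fin d)) +ᵥ F₁) with hUdef
    -- membership in translates
    have hmem : ∀ (a u : EuclideanSpace ℝ (Fin d)), u ∈ a +ᵥ F₁ ↔ -a + u ∈ F₁ := by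
      intro a u
      rw [Set.mem_vadd_set_iff_neg_vadd_mem]; rfl
    have hmem₂ : ∀ (a u : EuclideanSpace ℝ (Fin d)), u ∈ a +ᵥ F₂ ↔ -a + u ∈ F₂ := by
      intro a u
      rw [Set.mem_vadd_set_iff_neg_vadd_mem]; rfl
    have hdisj : (s : Set L₁).PairwiseDisjoint
        (fun x : L₁ => ((x : EuclideanSpace ℝ (Fin d)) +ᵥ F₁)) := by
      intro x _ x' _ hxx'
      refine Set.disjoint_left.mpr fun u hu hu' => hxx' ?_
      rw [hmem] at hu hu'
      have e1 : (-x : L₁) = (-x' : L₁) := by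
        obtain ⟨v, -, huniq⟩ := hpart₁ u
        rw [huniq (-x) (by simpa using hu), huniq (-x') (by simpa using hu')]
      have := congrArg (fun z : L₁ => -z) e1
      simpa using this
    have hUvol : volume U = s.card * volume F₁ := by
      rw [hUdef, measure_biUnion_finset hdisj
        (fun x _ => hF₁m.const_vadd ((x : EuclideanSpace ℝ (Fin d))))]
      simp [measure_vadd, Finset.sum_const, nsmul_eq_mul]
    set setT : Set L₂ := {y : L₂ | ∃ u ∈ U, -(y : EuclideanSpace ℝ (Fin d)) + u ∈ F₂} with hsetT
    have hsub : setT ⊆ ⋃ x ∈ s, {y : L₂ | ‖(y : EuclideanSpace ℝ (Fin d)) - x‖ ≤ R} := by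
      rintro y ⟨u, hu, hw₂⟩
      rw [hUdef, Set.mem_iUnion₂] at hu
      obtain ⟨x, hxs, hux⟩ := hu
      rw [hmem] at hux
      refine Set.mem_iUnion₂.mpr ⟨x, hxs, ?_⟩
      have : (y : EuclideanSpace ℝ (Fin d)) - x
          = (-(x : EuclideanSpace ℝ (Fin d)) + u) - (-(y : EuclideanSpace ℝ (Fin d)) + u) := by
        abel
      rw [Set.mem_setOf_eq, this]
      exact le_trans (norm_sub_le _ _) (add_le_add (hr₁ _ hux) (hr₂ _ hw₂))
    have hTfin : setT.Finite :=
      Set.Finite.subset (Set.Finite.biUnion s.finite_toSet fun x _ => hfin x) hsub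
    set T : Finset L₂ := hTfin.toFinset with hT
    have hcover : U ⊆ ⋃ y ∈ T, ((y : EuclideanSpace ℝ (Fin d)) +ᵥ F₂) := by
      intro u hu
      obtain ⟨v, hv, -⟩ := hpart₂ u
      refine Set.mem_iUnion₂.mpr ⟨-v, ?_, ?_⟩
      · rw [hT, Set.Finite.mem_toFinset]
        exact ⟨u, hu, by simpa using hv⟩
      · rw [hmem₂]
        simpa using hv
    have hUle : volume U ≤ T.card * volume F₂ := by
      refine le_trans (measure_mono hcover) (le_trans (measure_biUnion_finset_le T _) ?_)
      simp [measure_vadd, Finset.sum_const, nsmul_eq_mul]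
    have hcard : s.card ≤ T.card := by
      rw [hUvol, hFF] at hUle
      exact_mod_cast (ENNReal.mul_le_mul_iff_left h1.1 h1.2).mp hUle
    refine le_trans hcard (Finset.card_le_card ?_)
    intro y hy
    rw [hT, Set.Finite.mem_toFinset] at hy
    obtain ⟨x, hxs, hyx⟩ := Set.mem_iUnion₂.mp (hsub hy)
    exact Finset.mem_biUnion.mpr ⟨x, hxs, by rw [ht]; rw [Set.Finite.mem_toFinset]; exact hyx⟩
  obtain ⟨f, hfinj, hfm⟩ := (Finset.all_card_le_biUnion_card_iff_exists_injective t).1 hall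
  refine ⟨R, hR0, f, hfinj, fun x => ?_⟩
  have := hfm x
  rw [ht, Set.Finite.mem_toFinset] at this
  exact this

open MeasureTheory

/-- Any two lattices in `ℝ^d` of the same covolume are bounded displacement equivalent:
there is a bijection between them moving each point by a uniformly bounded distance. -/
theorem lattices_same_covolume_BD (d : ℕ)
    (L₁ L₂ : Submodule ℤ (EuclideanSpace ℝ (Fin d)))
    [DiscreteTopology L₁] [IsZLattice ℝ L₁]
    [DiscreteTopology L₂] [IsZLattice ℝ L₂]
    (hcov : ZLattice.covolume L₁ = ZLattice.covolume L₂) :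
    ∃ f : L₁ ≃ L₂, ∃ C : ℝ,
      ∀ x : L₁, ‖(f x : EuclideanSpace ℝ (Fin d)) - (x : EuclideanSpace ℝ (Fin d))‖ ≤ C := by
  obtain ⟨R, hR0, f, hfinj, hf⟩ := exists_BD_injection d L₁ L₂ hcov
  obtain ⟨R', hR'0, g, hginj, hg⟩ := exists_BD_injection d L₂ L₁ hcov.symm
  have : Nonempty L₂ := ⟨0⟩
  obtain ⟨e, he⟩ := csb_prop hfinj hginj
  refine ⟨e, max R R', fun x => ?_⟩
  rcases he x with h | h
  · rw [h]
    exact le_trans (hf x) (le_max_left _ _)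
  · have := hg (e x)
    rw [h] at this
    calc ‖(e x : EuclideanSpace ℝ (Fin d)) - (x : EuclideanSpace ℝ (Fin d))‖
        = ‖(x : EuclideanSpace ℝ (Fin d)) - (e x : EuclideanSpace ℝ (Fin d))‖ := norm_sub_rev _ _
      _ ≤ R' := this
      _ ≤ max R R' := le_max_right _ _
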